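/- Let s ∈ B be a boundary vertex. Then for every j and every vertex v ∈ R_j, the distance in G from s to v satisfies δ_G(s,v) = min_{b ∈ B_j} ( δ_G(s,b) + δ_j(b,v) ). In particular, the distances in G from a boundary vertex s to all vertices of a region R_j are determined by the distances from s to the boundary vertices of R_j together with the internal distances δ_j of the region. -/

import Mathlib

/-- A directed graph on vertex type `V` with integer edge lengths. -/
structure Digraph' (V : Type) where
  Adj : V → V → Prop
  len : V → V → ℤ

namespace Digraph'

variable {V : Type}

/-- Directed walks in `G` from `u` to `v`. -/
inductive Walk (G : Digraph' V) : V → V → Type where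
  | nil {u : V} : Walk G u u
  | cons {u v w : V} (h : G.Adj u v) (p : Walk G v w) : Walk G u w

/-- The total length (weight) of a walk: the sum of the lengths of its edges. -/
def Walk.weight {G : Digraph' V} : {u v : V} → G.Walk u v → ℤ
  | _, _, .nil => 0
  | u, _, .cons (v := x) _ p => G.len u x + Walk.weight p

/-- The list of vertices visited by a walk. -/
def Walk.support {G : Digraph' V} : {u v : V} → G.Walk u v → List V
  | u, _, .nil => [u]
  | u, _, .cons _ p => u :: Walk.support p

/-- The number of edges of a walk. -/
def Walk.edgeCount {G : Digraph' V} : {u v : V} → G.Walk u v → ℕ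
  | _, _, .nil => 0
  | _, _, .cons _ p => Walk.edgeCount p + 1

/-- The distance from `u` to `v`: the infimum of the total lengths of directed walks
from `u` to `v` (`⊤` if there is no such walk). -/
noncomputable def dist (G : Digraph' V) (u v : V) : EReal :=
  ⨅ p : G.Walk u v, ((Walk.weight p : ℝ) : EReal)

/-- The subgraph of `G` induced by a set `S` of vertices. -/
def induce (G : Digraph' V) (S : Set V) : Digraph' V where
  Adj a b := G.Adj a b ∧ a ∈ S ∧ b ∈ S
  len := G.len

end Digraph'
namespace Digraph'

variable {V : Type}

/-- The region induced by a set `F` of (directed) edges: all vertices incident with an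
edge of `F`. -/
def region (F : Set (V × V)) : Set V :=
  {x : V | ∃ p ∈ F, x = p.1 ∨ x = p.2}

/-- The boundary vertices of the `j`-th region of an edge partition `F`: vertices of the
`j`-th region that also belong to some other region. -/
def boundary {m : ℕ} (F : Fin m → Set (V × V)) (j : Fin m) : Set V :=
  region (F j) ∩ {x : V | ∃ j', j' ≠ j ∧ x ∈ region (F j')}

/-- The directed graph with the same vertices as `G` whose edges are the pairs in `F`
(with lengths inherited from `G`). -/
def partGraph (G : Digraph' V) (F : Set (V × V)) : Digraph' V where
  Adj a b := (a, b) ∈ F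
  len := G.len

end Digraph'

namespace Digraph'

variable {V : Type}

/-- Concatenation of walks. -/
def Walk.append {G : Digraph' V} : {u v w : V} → G.Walk u v → G.Walk v w → G.Walk u w
  | _, _, _, .nil, q => q
  | _, _, _, .cons h p, q => .cons h (p.append q)

lemma Walk.weight_append {G : Digraph' V} {u v w : V} (p : G.Walk u v) (q : G.Walk v w) :
    (p.append q).weight = p.weight + q.weight := by
  induction p with
  | nil => simp [append, weight]
  | cons h p ih => simp [append, weight, ih]; ring

lemma Walk.split {G : Digraph' V} :
    ∀ {u v x : V} (p : G.Walk u v), x ∈ p.support →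
      ∃ (p1 : G.Walk u x) (p2 : G.Walk x v),
        p1.weight + p2.weight = p.weight ∧ p2.support.Sublist p.support
  | u, _, x, .nil, hx => by
      simp only [support, List.mem_singleton] at hx
      subst hx
      exact ⟨.nil, .nil, by simp [weight], by simp⟩
  | u, v, x, .cons h p, hx => by
      simp only [support, List.mem_cons] at hx
      rcases hx with h1 | h2
      · subst h1
        exact ⟨.nil, .cons h p, by simp [weight], List.Sublist.refl _⟩
      · obtain ⟨p1, p2, hw, hsub⟩ := Walk.split p h2
        refine ⟨.cons h p1, p2, by simp only [weight]; omega, ?_⟩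
        exact hsub.trans (List.sublist_cons_self _ _)

lemma Walk.exists_nodup {G : Digraph' V}
    (hnoneg : ∀ (x : V) (p : G.Walk x x), 0 ≤ p.weight) {u v : V} (p : G.Walk u v) :
    ∃ q : G.Walk u v, q.weight ≤ p.weight ∧ q.support.Nodup := by
  induction p with
  | nil => exact ⟨.nil, le_refl _, by simp [support]⟩
  | @cons u x v h p ih =>
    obtain ⟨q, hqw, hqn⟩ := ih
    by_cases hu : u ∈ q.support
    · obtain ⟨q1, q2, hw, hsub⟩ := Walk.split q hu
      refine ⟨q2, ?_, hsub.nodup hqn⟩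
      have h0 : 0 ≤ (Walk.cons h q1).weight := hnoneg _ _
      simp only [weight] at h0 ⊢
      omega
    · exact ⟨.cons h q, by simp only [weight]; omega, by simp [support, hqn, hu]⟩

lemma Walk.length_support {G : Digraph' V} {u v : V} (p : G.Walk u v) :
    p.support.length = p.edgeCount + 1 := by
  induction p <;> simp [support, edgeCount, *]

lemma Walk.weight_ge {G : Digraph' V} {L : ℤ} (hL : ∀ a b, L ≤ G.len a b)
    (hL0 : L ≤ 0) {u v : V} (p : G.Walk u v) : (p.edgeCount : ℤ) * L ≤ p.weight := by
  induction p with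
  | nil => simp [weight, edgeCount]
  | @cons u x v h p ih =>
    have := hL u x
    simp only [weight, edgeCount]
    push_cast
    nlinarith

lemma exists_lb (G : Digraph' V) [Fintype V] : ∃ L : ℤ, L ≤ 0 ∧ ∀ a b, L ≤ G.len a b := by
  rcases isEmpty_or_nonempty V with h | h
  · exact ⟨0, le_refl _, fun a => (IsEmpty.elim h a)⟩
  · obtain ⟨p, -, hp⟩ := Finset.exists_min_image (Finset.univ : Finset (V × V))
      (fun p => G.len p.1 p.2)
      ⟨(Classical.arbitrary V, Classical.arbitrary V), Finset.mem_univ _⟩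
    exact ⟨min (G.len p.1 p.2) 0, min_le_right _ _,
      fun a b => le_trans (min_le_left _ _) (hp (a, b) (Finset.mem_univ _))⟩

lemma exists_K (G : Digraph' V) [Fintype V]
    (hnoneg : ∀ (x : V) (p : G.Walk x x), 0 ≤ p.weight) :
    ∃ K : ℤ, ∀ (u v : V) (p : G.Walk u v), K ≤ p.weight := by
  obtain ⟨L, hL0, hL⟩ := exists_lb G
  refine ⟨(Fintype.card V : ℤ) * L, fun u v p => ?_⟩
  obtain ⟨q, hqw, hqn⟩ := Walk.exists_nodup hnoneg p
  have h1 : q.edgeCount + 1 ≤ Fintype.card V := by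
    have := hqn.length_le_card
    rwa [q.length_support] at this
  have h2 : (q.edgeCount : ℤ) ≤ (Fintype.card V : ℤ) := by exact_mod_cast Nat.le_of_succ_le h1
  have h3 := q.weight_ge hL hL0
  nlinarith

lemma K_le_dist {G : Digraph' V} {K : ℤ}
    (hK : ∀ (u v : V) (p : G.Walk u v), K ≤ p.weight) (u v : V) :
    ((K : ℝ) : EReal) ≤ G.dist u v :=
  le_iInf fun p => by exact_mod_cast hK u v p

lemma dist_ne_bot {G : Digraph' V} {K : ℤ}
    (hK : ∀ (u v : V) (p : G.Walk u v), K ≤ p.weight) (u v : V) :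
    G.dist u v ≠ ⊥ :=
  ((EReal.bot_lt_coe _).trans_le (K_le_dist hK u v)).ne'

lemma exists_min (G : Digraph' V) [Fintype V]
    (hnoneg : ∀ (x : V) (p : G.Walk x x), 0 ≤ p.weight) (u v : V)
    (hne : Nonempty (G.Walk u v)) :
    ∃ p : G.Walk u v, G.dist u v = ((p.weight : ℝ) : EReal) := by
  obtain ⟨K, hK⟩ := exists_K G hnoneg
  obtain ⟨n, ⟨p, hp⟩, hmin⟩ := Int.exists_least_of_bdd
    (P := fun n : ℤ => ∃ p : G.Walk u v, p.weight = n)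
    ⟨K, fun z ⟨p, hp⟩ => hp ▸ hK u v p⟩ ⟨_, hne.some, rfl⟩
  refine ⟨p, le_antisymm (iInf_le _ p) (le_iInf fun q => ?_)⟩
  have hq : p.weight ≤ q.weight := hp ▸ hmin _ ⟨q, rfl⟩
  exact_mod_cast hq

/-- A walk in a part graph is a walk in `G`. -/
def Walk.toG {G : Digraph' V} {F : Set (V × V)} (hF : ∀ a b, (a, b) ∈ F → G.Adj a b) :
    {u v : V} → (G.partGraph F).Walk u v → G.Walk u v
  | _, _, .nil => .nil
  | _, _, .cons h p => .cons (hF _ _ h) (Walk.toG hF p)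

lemma Walk.toG_weight {G : Digraph' V} {F : Set (V × V)}
    (hF : ∀ a b, (a, b) ∈ F → G.Adj a b) {u v : V} (p : (G.partGraph F).Walk u v) :
    (p.toG hF).weight = p.weight := by
  induction p <;> simp [toG, weight, partGraph, *]

lemma mem_region_left {F : Set (V × V)} {a b : V} (h : (a, b) ∈ F) : a ∈ region F :=
  ⟨(a, b), h, Or.inl rfl⟩

lemma mem_region_right {F : Set (V × V)} {a b : V} (h : (a, b) ∈ F) : b ∈ region F :=
  ⟨(a, b), h, Or.inr rfl⟩

lemma partWalk_start_mem {G : Digraph' V} {F : Set (V × V)} {u v : V}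
    (q : (G.partGraph F).Walk u v) (hv : v ∈ region F) : u ∈ region F := by
  cases q with
  | nil => exact hv
  | cons h p => exact mem_region_left h

lemma decomp {G : Digraph' V} {m : ℕ} {F : Fin m → Set (V × V)}
    (hcover : (⋃ j, F j) = {p : V × V | G.Adj p.1 p.2}) {j : Fin m} :
    ∀ {u v : V} (p : G.Walk u v), v ∈ region (F j) →
      (∃ q : (G.partGraph (F j)).Walk u v, q.weight = p.weight) ∨
      (∃ b ∈ boundary F j, ∃ (p1 : G.Walk u b) (p2 : (G.partGraph (F j)).Walk b v),
        p1.weight + p2.weight = p.weight) := by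
  intro u v p
  induction p with
  | nil => exact fun _ => Or.inl ⟨.nil, rfl⟩
  | @cons u x w h p ih =>
    intro hv
    obtain ⟨j₂, hj₂⟩ : ∃ j₂, (u, x) ∈ F j₂ := by
      have h2 : (u, x) ∈ ⋃ j', F j' := by rw [hcover]; exact h
      simpa using h2
    rcases ih hv with ⟨q, hq⟩ | ⟨b, hb, p1, p2, hw⟩
    · by_cases hj : j₂ = j
      · subst hj
        exact Or.inl ⟨.cons hj₂ q, by simp only [Walk.weight]; exact congrArg (G.len u x + ·) hq⟩
      · refine Or.inr ⟨x, ⟨partWalk_start_mem q hv, j₂, hj, mem_region_right hj₂⟩,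
          .cons h .nil, q, ?_⟩
        simp only [Walk.weight]; omega
    · refine Or.inr ⟨b, hb, .cons h p1, p2, ?_⟩
      simp only [Walk.weight]; omega

end Digraph'

/-- Let `s ∈ B` be a boundary vertex.  Then for every `j` and every
vertex `v ∈ R j`, `δ_G(s,v) = min_{b ∈ B j} ( δ_G(s,b) + δ_j(b,v) )`: the distances in `G`
from a boundary vertex `s` to all vertices of a region are determined by the distances from
`s` to the boundary vertices of the region together with the internal distances of the
region. -/
theorem stmt11 {V : Type} [Fintype V] (G : Digraph' V)
    (hnoneg : ∀ (x : V) (p : G.Walk x x), 0 ≤ p.weight)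
    (m : ℕ) (F : Fin m → Set (V × V))
    (hcover : (⋃ j, F j) = {p : V × V | G.Adj p.1 p.2})
    (hdisj : Pairwise fun a b => Disjoint (F a) (F b))
    (s : V) (hs : ∃ j, s ∈ Digraph'.boundary F j)
    (j : Fin m) (v : V) (hv : v ∈ Digraph'.region (F j)) :
    G.dist s v =
      ⨅ b ∈ Digraph'.boundary F j, (G.dist s b + (G.partGraph (F j)).dist b v) := by
  classical
  open Digraph' in
  have hFsub : ∀ (a b : V), (a, b) ∈ F j → G.Adj a b := fun a b hab => by
    have h2 : (a, b) ∈ ⋃ j', F j' := Set.mem_iUnion.mpr ⟨j, hab⟩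
    rwa [hcover] at h2
  have hnonegj : ∀ (x : V) (p : ((G.partGraph (F j))).Walk x x), 0 ≤ p.weight := fun x p => by
    rw [← Digraph'.Walk.toG_weight hFsub p]; exact hnoneg x _
  obtain ⟨K, hK⟩ := Digraph'.exists_K G hnoneg
  obtain ⟨K', hK'⟩ := Digraph'.exists_K (G.partGraph (F j)) hnonegj
  apply le_antisymm
  · refine le_iInf₂ fun b hb => ?_
    rcases isEmpty_or_nonempty (G.Walk s b) with h1 | h1
    · have hd : G.dist s b = ⊤ := iInf_of_empty _
      rw [hd, EReal.top_add_of_ne_bot (Digraph'.dist_ne_bot hK' b v)]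
      exact le_top
    rcases isEmpty_or_nonempty ((G.partGraph (F j)).Walk b v) with h2 | h2
    · have hd : (G.partGraph (F j)).dist b v = ⊤ := iInf_of_empty _
      rw [hd, EReal.add_top_of_ne_bot (Digraph'.dist_ne_bot hK s b)]
      exact le_top
    obtain ⟨p, hp⟩ := Digraph'.exists_min G hnoneg s b h1
    obtain ⟨q, hq⟩ := Digraph'.exists_min (G.partGraph (F j)) hnonegj b v h2
    rw [hp, hq]
    have h3 : G.dist s v ≤ (((p.append (q.toG hFsub)).weight : ℝ) : EReal) := iInf_le _ _
    rw [Digraph'.Walk.weight_append, Digraph'.Walk.toG_weight] at h3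
    refine h3.trans_eq ?_
    norm_cast
  · refine le_iInf fun p => ?_
    rcases Digraph'.decomp hcover p hv with ⟨q, hq⟩ | ⟨b, hb, p1, p2, hw⟩
    · have hsreg : s ∈ Digraph'.region (F j) := Digraph'.partWalk_start_mem q hv
      obtain ⟨j₀, hj₀reg, j₁, hj₁ne, hj₁reg⟩ := hs
      have hsb : s ∈ Digraph'.boundary F j := by
        refine ⟨hsreg, ?_⟩
        by_cases hjj : j₀ = j
        · exact ⟨j₁, by rw [← hjj]; exact hj₁ne, hj₁reg⟩
        · exact ⟨j₀, hjj, hj₀reg⟩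
      refine le_trans (iInf₂_le s hsb) ?_
      have h1 : G.dist s s ≤ ((0 : ℝ) : EReal) := by
        have h0 : G.dist s s ≤ (((Digraph'.Walk.nil : G.Walk s s).weight : ℝ) : EReal) :=
          iInf_le _ _
        simpa [Digraph'.Walk.weight] using h0
      have h2 : (G.partGraph (F j)).dist s v ≤ ((q.weight : ℝ) : EReal) := iInf_le _ q
      calc G.dist s s + (G.partGraph (F j)).dist s v
          ≤ ((0 : ℝ) : EReal) + ((q.weight : ℝ) : EReal) := add_le_add h1 h2
        _ = ((p.weight : ℝ) : EReal) := by rw [hq]; simp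
    · refine le_trans (iInf₂_le b hb) ?_
      have h1 : G.dist s b ≤ ((p1.weight : ℝ) : EReal) := iInf_le _ p1
      have h2 : (G.partGraph (F j)).dist b v ≤ ((p2.weight : ℝ) : EReal) := iInf_le _ p2
      calc G.dist s b + (G.partGraph (F j)).dist b v
          ≤ ((p1.weight : ℝ) : EReal) + ((p2.weight : ℝ) : EReal) := add_le_add h1 h2
        _ = ((p.weight : ℝ) : EReal) := by rw [← hw]; norm_cast
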